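/- Let σ be a relational vocabulary with symbols of arity at most 2, 𝒜 a Kripke structure, a ∈ A, and k ≥ 0. The following are equivalent: (1) there exists an M_k-coalgebra γ : (𝒮_a, a) → M_k(𝒮_a, a); (2) 𝒮_a, the submodel of 𝒜 generated by a, is a synchronization tree of height at most k. -/

import Mathlib

/-- A modal vocabulary: unary symbols (propositional variables) and binary symbols
(modalities); a relational vocabulary with symbols of arity at most 2. -/
structure ModalVocab : Type 1 where
  Prp : Type
  Act : Type

/-- A Kripke structure for a modal vocabulary. -/
structure Kripke (V : ModalVocab) : Type 1 where
  carrier : Type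
  unary : V.Prp → carrier → Prop
  rel : V.Act → carrier → carrier → Prop

/-- A homomorphism of Kripke structures. -/
def IsKHom {V : ModalVocab} (𝒜 ℬ : Kripke V) (h : 𝒜.carrier → ℬ.carrier) : Prop :=
  (∀ P x, 𝒜.unary P x → ℬ.unary P (h x)) ∧
  (∀ α x y, 𝒜.rel α x y → ℬ.rel α (h x) (h y))

/-- A morphism of pointed Kripke structures. -/
def IsPKHom {V : ModalVocab} (𝒜 : Kripke V) (a : 𝒜.carrier) (ℬ : Kripke V)
    (b : ℬ.carrier) (h : 𝒜.carrier → ℬ.carrier) : Prop :=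
  IsKHom 𝒜 ℬ h ∧ h a = b

/-- `chainFrom 𝒜 x l` : the list `l = [(α₁,a₁),…,(αⱼ,aⱼ)]` is a path of transitions
starting at `x`, i.e. `x →^{α₁} a₁ →^{α₂} ⋯ →^{αⱼ} aⱼ`. -/
def chainFrom {V : ModalVocab} (𝒜 : Kripke V) : 𝒜.carrier → List (V.Act × 𝒜.carrier) → Prop
  | _, [] => True
  | x, (α, y) :: l => 𝒜.rel α x y ∧ chainFrom 𝒜 y l

/-- The last element of a path starting at `x`. -/
def lastFrom {V : ModalVocab} (𝒜 : Kripke V) : 𝒜.carrier → List (V.Act × 𝒜.carrier) → 𝒜.carrier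
  | x, [] => x
  | _, (_, y) :: l => lastFrom 𝒜 y l

theorem chainFrom_take {V : ModalVocab} (𝒜 : Kripke V)
    (l : List (V.Act × 𝒜.carrier)) :
    ∀ (x : 𝒜.carrier) (n : ℕ), chainFrom 𝒜 x l → chainFrom 𝒜 x (l.take n) := by
  induction l with
  | nil => intro x n h; simpa using h
  | cons p l ih =>
    intro x n h
    cases n with
    | zero => simp [chainFrom]
    | succ n =>
      obtain ⟨α, y⟩ := p
      exact ⟨h.1, ih y n h.2⟩

/-- The universe of `M_k (𝒜, a)`: a sequence `[a, α₁, a₁, …, αⱼ, aⱼ]` with `j ≤ k`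
which is a path of transitions from `a`, represented by its list of steps. -/
def MkC {V : ModalVocab} (𝒜 : Kripke V) (a : 𝒜.carrier) (k : ℕ) : Type :=
  {l : List (V.Act × 𝒜.carrier) // l.length ≤ k ∧ chainFrom 𝒜 a l}

/-- The distinguished element `[a]` of `M_k (𝒜, a)`. -/
def mpt {V : ModalVocab} (𝒜 : Kripke V) (a : 𝒜.carrier) (k : ℕ) : MkC 𝒜 a k :=
  ⟨[], Nat.zero_le k, trivial⟩

/-- The counit: the last element of a sequence. -/
def meps {V : ModalVocab} {𝒜 : Kripke V} {a : 𝒜.carrier} {k : ℕ} (s : MkC 𝒜 a k) :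
    𝒜.carrier :=
  lastFrom 𝒜 a s.1

/-- The modal comonad: the Kripke structure `M_k (𝒜, a)`. -/
def MkS {V : ModalVocab} (𝒜 : Kripke V) (a : 𝒜.carrier) (k : ℕ) : Kripke V where
  carrier := MkC 𝒜 a k
  unary P s := 𝒜.unary P (meps s)
  rel α s t := ∃ a', t.1 = s.1 ++ [(α, a')]

/-- The prefix of `s` of length `i+1`. -/
def mPrefAt {V : ModalVocab} {𝒜 : Kripke V} {a : 𝒜.carrier} {k : ℕ} (s : MkC 𝒜 a k)
    (i : Fin s.1.length) : MkC 𝒜 a k :=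
  ⟨s.1.take (i + 1),
    le_trans (by rw [List.length_take]; exact min_le_right _ _) s.2.1,
    chainFrom_take 𝒜 s.1 a (i + 1) s.2.2⟩

/-- `F` is the Kleisli coextension of `f`, i.e. `F` is the map `f*` determined by
`f*[a] = [b]` and `f*(s[α,a']) = f*(s)[α, f(s[α,a'])]`. -/
def IsMCoext {V : ModalVocab} {𝒜 ℬ : Kripke V} {a : 𝒜.carrier} {b : ℬ.carrier} {k : ℕ}
    (f : MkC 𝒜 a k → ℬ.carrier) (F : MkC 𝒜 a k → MkC ℬ b k) : Prop :=
  ∀ s, (F s).1 = List.ofFn (fun i : Fin s.1.length => ((s.1.get i).1, f (mPrefAt s i)))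

/-- `x` is reachable from `a` by a path of transitions. -/
def Reach {V : ModalVocab} (𝒜 : Kripke V) (a x : 𝒜.carrier) : Prop :=
  ∃ l, chainFrom 𝒜 a l ∧ lastFrom 𝒜 a l = x

/-- The submodel `𝒮_a` of `𝒜` generated by `a`. -/
def GenSub {V : ModalVocab} (𝒜 : Kripke V) (a : 𝒜.carrier) : Kripke V where
  carrier := {x // Reach 𝒜 a x}
  unary P x := 𝒜.unary P x.1
  rel α x y := 𝒜.rel α x.1 y.1

/-- The point `a` of the generated submodel. -/
def gensubpt {V : ModalVocab} (𝒜 : Kripke V) (a : 𝒜.carrier) : (GenSub 𝒜 a).carrier :=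
  ⟨a, [], trivial, rfl⟩

/-- An `M_k`-coalgebra on a pointed Kripke structure `(ℬ, b)`. -/
structure MkCoalgebra {V : ModalVocab} (ℬ : Kripke V) (b : ℬ.carrier) (k : ℕ) where
  γ : ℬ.carrier → MkC ℬ b k
  hom : IsPKHom ℬ b (MkS ℬ b k) (mpt ℬ b k) γ
  counit : ∀ x, meps (γ x) = x
  comult : ∀ (x : ℬ.carrier) (i : Fin (γ x).1.length),
    (γ ((γ x).1.get i).2).1 = (γ x).1.take (i + 1)

section Aux

variable {V : ModalVocab} {𝒜 : Kripke V}

theorem chainFrom_append (l l' : List (V.Act × 𝒜.carrier)) :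
    ∀ x, chainFrom 𝒜 x (l ++ l') ↔
      chainFrom 𝒜 x l ∧ chainFrom 𝒜 (lastFrom 𝒜 x l) l' := by
  induction l with
  | nil => intro x; simp [chainFrom, lastFrom]
  | cons p l ih =>
    intro x; obtain ⟨α, y⟩ := p
    simp [chainFrom, lastFrom, ih y, and_assoc]

theorem lastFrom_append (l l' : List (V.Act × 𝒜.carrier)) :
    ∀ x, lastFrom 𝒜 x (l ++ l') = lastFrom 𝒜 (lastFrom 𝒜 x l) l' := by
  induction l with
  | nil => intro x; simp [lastFrom]
  | cons p l ih => obtain ⟨α, y⟩ := p; intro x; simp [lastFrom, ih]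

theorem lastFrom_take (l : List (V.Act × 𝒜.carrier)) :
    ∀ (i : ℕ) (x : 𝒜.carrier) (h : i < l.length),
      lastFrom 𝒜 x (l.take (i + 1)) = (l.get ⟨i, h⟩).2 := by
  induction l with
  | nil => intro i x h; simp at h
  | cons p l ih =>
    intro i x h
    obtain ⟨α, y⟩ := p
    cases i with
    | zero => simp [lastFrom]
    | succ i =>
      have h' : i < l.length := by simpa using h
      simpa [lastFrom] using ih i y h'

def projG {a : 𝒜.carrier} (L : List (V.Act × (GenSub 𝒜 a).carrier)) :
    List (V.Act × 𝒜.carrier) :=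
  L.map (fun p => (p.1, p.2.1))

theorem projG_inj {a : 𝒜.carrier} : Function.Injective (projG (𝒜 := 𝒜) (a := a)) := by
  apply List.map_injective_iff.mpr
  rintro ⟨α, x⟩ ⟨β, y⟩ h
  simp only [Prod.mk.injEq] at h
  exact Prod.ext h.1 (Subtype.ext h.2)

theorem chainFrom_projG {a : 𝒜.carrier} :
    ∀ (L : List (V.Act × (GenSub 𝒜 a).carrier)) (x : (GenSub 𝒜 a).carrier),
      chainFrom (GenSub 𝒜 a) x L → chainFrom 𝒜 x.1 (projG L)
  | [], _, _ => trivial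
  | (α, y) :: L, x, h => ⟨h.1, chainFrom_projG L y h.2⟩

theorem lastFrom_projG {a : 𝒜.carrier} :
    ∀ (L : List (V.Act × (GenSub 𝒜 a).carrier)) (x : (GenSub 𝒜 a).carrier),
      (lastFrom (GenSub 𝒜 a) x L).1 = lastFrom 𝒜 x.1 (projG L)
  | [], _ => rfl
  | (α, y) :: L, x => lastFrom_projG L y

theorem reach_step {a x y : 𝒜.carrier} {α : V.Act} (hx : Reach 𝒜 a x)
    (h : 𝒜.rel α x y) : Reach 𝒜 a y := by
  obtain ⟨l, hc, hl⟩ := hx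
  refine ⟨l ++ [(α, y)], ?_, ?_⟩
  · rw [chainFrom_append]
    exact ⟨hc, ⟨by rw [hl]; exact h, trivial⟩⟩
  · rw [lastFrom_append, hl]; rfl

def liftG {a : 𝒜.carrier} : (x : (GenSub 𝒜 a).carrier) →
    (l : List (V.Act × 𝒜.carrier)) → chainFrom 𝒜 x.1 l →
    List (V.Act × (GenSub 𝒜 a).carrier)
  | _, [], _ => []
  | x, (α, y) :: l, h =>
    (α, ⟨y, reach_step x.2 h.1⟩) :: liftG ⟨y, reach_step x.2 h.1⟩ l h.2

theorem projG_liftG {a : 𝒜.carrier} :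
    ∀ (x : (GenSub 𝒜 a).carrier) (l : List (V.Act × 𝒜.carrier))
      (h : chainFrom 𝒜 x.1 l), projG (liftG x l h) = l
  | _, [], _ => rfl
  | x, (α, y) :: l, h => by
    simp only [liftG, projG, List.map_cons]
    exact congrArg _ (projG_liftG ⟨y, reach_step x.2 h.1⟩ l h.2)

theorem chainFrom_liftG {a : 𝒜.carrier} :
    ∀ (x : (GenSub 𝒜 a).carrier) (l : List (V.Act × 𝒜.carrier))
      (h : chainFrom 𝒜 x.1 l), chainFrom (GenSub 𝒜 a) x (liftG x l h)
  | _, [], _ => trivial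
  | x, (α, y) :: l, h => ⟨h.1, chainFrom_liftG ⟨y, reach_step x.2 h.1⟩ l h.2⟩

theorem length_liftG {a : 𝒜.carrier} (x : (GenSub 𝒜 a).carrier)
    (l : List (V.Act × 𝒜.carrier)) (h : chainFrom 𝒜 x.1 l) :
    (liftG x l h).length = l.length := by
  have := congrArg List.length (projG_liftG x l h)
  simpa [projG] using this

theorem gamma_eq {a : 𝒜.carrier} {k : ℕ}
    (C : MkCoalgebra (GenSub 𝒜 a) (gensubpt 𝒜 a) k) :
    ∀ L : List (V.Act × (GenSub 𝒜 a).carrier),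
      chainFrom (GenSub 𝒜 a) (gensubpt 𝒜 a) L →
      (C.γ (lastFrom (GenSub 𝒜 a) (gensubpt 𝒜 a) L)).1 = L := by
  intro L
  induction L using List.reverseRecOn with
  | nil =>
    intro _
    have h2 := C.hom.2
    simp only [lastFrom, h2]
    rfl
  | append_singleton L p ih =>
    intro h
    obtain ⟨α, x⟩ := p
    rw [chainFrom_append] at h
    obtain ⟨a', ha'⟩ := C.hom.1.2 α _ _ h.2.1
    rw [ih h.1] at ha'
    have hc := C.counit x
    unfold meps at hc
    rw [ha', lastFrom_append] at hc
    simp only [lastFrom] at hc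
    rw [lastFrom_append]
    simp only [lastFrom]
    rw [ha', hc]

end Aux

/-- There is an `M_k`-coalgebra on `(𝒮_a, a)` iff the submodel generated by `a` is a
synchronization tree of height at most `k`: every element reachable from `a` has a
unique path from `a`, and all paths from `a` have length at most `k`. -/
theorem stmt14 (V : ModalVocab) (𝒜 : Kripke V) (a : 𝒜.carrier) (k : ℕ) :
    Nonempty (MkCoalgebra (GenSub 𝒜 a) (gensubpt 𝒜 a) k) ↔
    ((∀ l l' : List (V.Act × 𝒜.carrier), chainFrom 𝒜 a l → chainFrom 𝒜 a l' →
        lastFrom 𝒜 a l = lastFrom 𝒜 a l' → l = l') ∧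
      (∀ l : List (V.Act × 𝒜.carrier), chainFrom 𝒜 a l → l.length ≤ k)) := by
  constructor
  · rintro ⟨C⟩
    constructor
    · intro l l' hc hc' hlast
      have hx : lastFrom (GenSub 𝒜 a) (gensubpt 𝒜 a) (liftG (gensubpt 𝒜 a) l hc) =
          lastFrom (GenSub 𝒜 a) (gensubpt 𝒜 a) (liftG (gensubpt 𝒜 a) l' hc') := by
        apply Subtype.ext
        rw [lastFrom_projG, lastFrom_projG, projG_liftG (gensubpt 𝒜 a) l hc, projG_liftG (gensubpt 𝒜 a) l' hc']
        exact hlast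
      have h1 := gamma_eq C _ (chainFrom_liftG (gensubpt 𝒜 a) l hc)
      have h2 := gamma_eq C _ (chainFrom_liftG (gensubpt 𝒜 a) l' hc')
      rw [hx] at h1
      have := h1.symm.trans h2
      have := congrArg projG this
      rwa [projG_liftG (gensubpt 𝒜 a) l hc, projG_liftG (gensubpt 𝒜 a) l' hc'] at this
    · intro l hc
      have h1 := gamma_eq C _ (chainFrom_liftG (gensubpt 𝒜 a) l hc)
      have hlen := (C.γ (lastFrom (GenSub 𝒜 a) (gensubpt 𝒜 a)
        (liftG (gensubpt 𝒜 a) l hc))).2.1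
      rw [h1, length_liftG (gensubpt 𝒜 a) l hc] at hlen
      exact hlen
  · rintro ⟨huniq, hlen⟩
    have hch : ∀ x : (GenSub 𝒜 a).carrier, chainFrom 𝒜 a x.2.choose :=
      fun x => x.2.choose_spec.1
    have hla : ∀ x : (GenSub 𝒜 a).carrier, lastFrom 𝒜 a x.2.choose = x.1 :=
      fun x => x.2.choose_spec.2
    let γ : (GenSub 𝒜 a).carrier → MkC (GenSub 𝒜 a) (gensubpt 𝒜 a) k := fun x =>
      ⟨liftG (gensubpt 𝒜 a) x.2.choose (hch x),
        by rw [length_liftG (gensubpt 𝒜 a) x.2.choose (hch x)]; exact hlen _ (hch x),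
        chainFrom_liftG (gensubpt 𝒜 a) x.2.choose (hch x)⟩
    have hproj : ∀ x, projG (γ x).1 = x.2.choose :=
      fun x => projG_liftG (gensubpt 𝒜 a) x.2.choose (hch x)
    have hkey : ∀ (x : (GenSub 𝒜 a).carrier) (L : List (V.Act × (GenSub 𝒜 a).carrier)),
        chainFrom (GenSub 𝒜 a) (gensubpt 𝒜 a) L →
        lastFrom (GenSub 𝒜 a) (gensubpt 𝒜 a) L = x → (γ x).1 = L := by
      intro x L hc hl
      apply projG_inj
      rw [hproj x]
      apply huniq _ _ (hch x) (chainFrom_projG L (gensubpt 𝒜 a) hc)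
      rw [hla x, ← hl]
      exact lastFrom_projG L (gensubpt 𝒜 a)
    have hcounit : ∀ x, meps (γ x) = x := by
      intro x
      apply Subtype.ext
      show (lastFrom (GenSub 𝒜 a) (gensubpt 𝒜 a) (γ x).1).1 = x.1
      rw [lastFrom_projG (γ x).1 (gensubpt 𝒜 a), hproj x]
      exact hla x
    refine ⟨⟨γ, ⟨⟨?_, ?_⟩, ?_⟩, hcounit, ?_⟩⟩
    · intro P x hP
      show (GenSub 𝒜 a).unary P (meps (γ x))
      rw [hcounit x]; exact hP
    · intro α x y hr
      refine ⟨y, ?_⟩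
      apply hkey y ((γ x).1 ++ [(α, y)])
      · rw [chainFrom_append]
        refine ⟨(γ x).2.2, ?_, trivial⟩
        have hx : lastFrom (GenSub 𝒜 a) (gensubpt 𝒜 a) (γ x).1 = x := hcounit x
        rw [hx]; exact hr
      · rw [lastFrom_append]; rfl
    · apply Subtype.ext
      exact hkey (gensubpt 𝒜 a) [] trivial rfl
    · intro x i
      apply hkey
      · exact chainFrom_take (GenSub 𝒜 a) (γ x).1 (gensubpt 𝒜 a) (i + 1) (γ x).2.2
      · rw [lastFrom_take (γ x).1 i (gensubpt 𝒜 a) i.2]
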